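/- For ε = 0 (planar symmetry) and ρ₀ < 0 constant, let μ(Y) = (4π/3)ρ₀Y³ and define P(Y) by solving the TOV equation P'/(ρ₀+P) = −(μ/Y² + 4πPY)/(−2μ/Y) with boundary condition P(Y_g) = 0. Then explicitly P(Y) = ρ₀·( 2√(|Y_s|/Y_g) / (3√(|Y_s|/Y_g) − √(|Y_s|Y²/Y_g³)) − 1 ) = ρ₀·( 2/(3 − Y/Y_g) − 1 ), and P(Y) > 0 for 0 < Y < Y_g (using ρ₀ < 0). -/

import Mathlib

open Real

/-- For planar symmetry (`ε = 0`) with `ρ₀ < 0` constant,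
`μ(Y) = (4π/3)ρ₀Y³`, if `P` solves the TOV equation
`P'/(ρ₀+P) = -(μ/Y² + 4πPY)/(-2μ/Y)` with `P(Y_g) = 0`, then explicitly
`P(Y) = ρ₀(2√(|Y_s|/Y_g)/(3√(|Y_s|/Y_g) - √(|Y_s|Y²/Y_g³)) - 1)
      = ρ₀(2/(3 - Y/Y_g) - 1)`, which is positive on `(0, Y_g)`. -/
theorem planar_incompressible_solution
    (ρ₀ Yg Ys : ℝ) (hρ₀ : ρ₀ < 0) (hYg : 0 < Yg)
    (hYs : Ys = (8 * π / 3) * ρ₀ * Yg ^ 3)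
    (μ P : ℝ → ℝ)
    (hμ : ∀ Y, μ Y = (4 * π / 3) * ρ₀ * Y ^ 3)
    (hPdiff : DifferentiableOn ℝ P (Set.Ioo 0 Yg))
    (hPcont : ContinuousOn P (Set.Ioc 0 Yg))
    (hTOV : ∀ Y ∈ Set.Ioo (0 : ℝ) Yg,
      deriv P Y / (ρ₀ + P Y) =
        -(μ Y / Y ^ 2 + 4 * π * P Y * Y) / (-(2 * μ Y / Y)))
    (hbc : P Yg = 0) :
    ∀ Y ∈ Set.Ioo (0 : ℝ) Yg,
      P Y = ρ₀ * (2 * Real.sqrt (|Ys| / Yg) /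
        (3 * Real.sqrt (|Ys| / Yg) - Real.sqrt (|Ys| * Y ^ 2 / Yg ^ 3)) - 1) ∧
      P Y = ρ₀ * (2 / (3 - Y / Yg) - 1) ∧
      0 < P Y := by
  have hπ : (0:ℝ) < π := Real.pi_pos
  have hρne : ρ₀ ≠ 0 := ne_of_lt hρ₀
  have hYgne : Yg ≠ 0 := ne_of_gt hYg
  -- Step 1: rewrite the TOV equation
  have key : ∀ Y ∈ Set.Ioo (0:ℝ) Yg,
      ρ₀ + P Y ≠ 0 ∧ deriv P Y = (ρ₀ + P Y) * (ρ₀ + 3 * P Y) / (2 * ρ₀ * Y) := by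
    intro Y hY
    have hY0 : (0:ℝ) < Y := hY.1
    have hYne : Y ≠ 0 := ne_of_gt hY0
    have hTOV' := hTOV Y hY
    rw [hμ] at hTOV'
    have hrhs : -((4 * π / 3) * ρ₀ * Y ^ 3 / Y ^ 2 + 4 * π * P Y * Y) /
        (-(2 * ((4 * π / 3) * ρ₀ * Y ^ 3) / Y)) = (ρ₀ + 3 * P Y) / (2 * ρ₀ * Y) := by
      rw [div_eq_div_iff]
      · field_simp
      · have h2 : 2 * (4 * π / 3 * ρ₀ * Y ^ 3) / Y < 0 := by
          apply div_neg_of_neg_of_pos _ hY0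
          have h3 : (0:ℝ) < 4 * π / 3 * Y ^ 3 := by positivity
          nlinarith
        exact ne_of_gt (neg_pos.mpr h2)
      · intro h
        rcases mul_eq_zero.mp h with h | h
        · rcases mul_eq_zero.mp h with h | h
          · norm_num at h
          · exact hρne h
        · exact hYne h
    rw [hrhs] at hTOV'
    have hne : ρ₀ + P Y ≠ 0 := by
      intro h
      rw [h, div_zero] at hTOV'
      have hP : P Y = -ρ₀ := by linarith
      rw [hP] at hTOV'
      have h1 : ρ₀ + 3 * -ρ₀ = -2 * ρ₀ := by ring
      rw [h1] at hTOV'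
      have h2 : (-2 * ρ₀) / (2 * ρ₀ * Y) ≠ 0 := by
        apply div_ne_zero
        · intro h'; apply hρne; linarith [mul_eq_zero.mp h']
        · exact mul_ne_zero (mul_ne_zero two_ne_zero hρne) hYne
      exact h2 hTOV'.symm
    refine ⟨hne, ?_⟩
    rw [div_eq_iff hne] at hTOV'
    rw [hTOV']
    field_simp
  -- Step 2: the first integral R(Y) = (ρ₀+3P)/((ρ₀+P)Y) has derivative 0
  set R : ℝ → ℝ := fun Y => (ρ₀ + 3 * P Y) / ((ρ₀ + P Y) * Y) with hR
  have hRderiv : ∀ Y ∈ Set.Ioo (0:ℝ) Yg, HasDerivAt R 0 Y := by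
    intro Y hY
    have hY0 : (0:ℝ) < Y := hY.1
    have hYne : Y ≠ 0 := ne_of_gt hY0
    obtain ⟨hne, hd⟩ := key Y hY
    have hPd : HasDerivAt P (deriv P Y) Y := by
      have := (hPdiff Y hY).differentiableAt (isOpen_Ioo.mem_nhds hY)
      exact this.hasDerivAt
    have h1 : HasDerivAt (fun Y => ρ₀ + 3 * P Y) (3 * deriv P Y) Y := by
      simpa using ((hPd.const_mul 3).const_add ρ₀)
    have h2 : HasDerivAt (fun Y => (ρ₀ + P Y) * Y)
        ((deriv P Y) * Y + (ρ₀ + P Y) * 1) Y := by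
      exact (hPd.const_add ρ₀).mul (hasDerivAt_id Y)
    have h3 := h1.div h2 (mul_ne_zero hne hYne)
    have h4 : HasDerivAt R ((3 * deriv P Y * ((ρ₀ + P Y) * Y) - (ρ₀ + 3 * P Y) * (deriv P Y * Y + (ρ₀ + P Y) * 1)) / ((ρ₀ + P Y) * Y) ^ 2) Y := h3
    convert h4 using 1
    rw [hd]
    field_simp
    ring
  -- Step 3: R is constant, equal to 1/Yg
  have hRval : ∀ Y ∈ Set.Ioo (0:ℝ) Yg, R Y = 1 / Yg := by
    intro Y₀ hY₀
    have hY₀0 : (0:ℝ) < Y₀ := hY₀.1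
    have hY₀g : Y₀ < Yg := hY₀.2
    -- continuity of R on Icc Y₀ Yg
    have hsub : Set.Icc Y₀ Yg ⊆ Set.Ioc 0 Yg := fun y hy =>
      ⟨lt_of_lt_of_le hY₀0 hy.1, hy.2⟩
    have hne' : ∀ y ∈ Set.Icc Y₀ Yg, (ρ₀ + P y) * y ≠ 0 := by
      intro y hy
      rcases eq_or_lt_of_le hy.2 with h | h
      · subst h
        rw [hbc]
        simp only [add_zero]
        exact mul_ne_zero hρne (ne_of_gt (lt_of_lt_of_le hY₀0 hy.1))
      · exact mul_ne_zero (key y ⟨lt_of_lt_of_le hY₀0 hy.1, h⟩).1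
          (ne_of_gt (lt_of_lt_of_le hY₀0 hy.1))
    have hRcont : ContinuousOn R (Set.Icc Y₀ Yg) := by
      apply ContinuousOn.div
      · exact (continuousOn_const.add (continuousOn_const.mul (hPcont.mono hsub)))
      · exact ((continuousOn_const.add (hPcont.mono hsub)).mul continuousOn_id)
      · exact hne'
    have hconst : ∀ y ∈ Set.Icc Y₀ Yg, R y = (fun _ => R Y₀) y := by
      apply eq_of_has_deriv_right_eq (f' := fun _ => (0:ℝ))
      · intro x hx
        exact (hRderiv x ⟨lt_of_lt_of_le hY₀0 hx.1, hx.2⟩).hasDerivWithinAt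
      · intro x hx
        exact (hasDerivAt_const x (R Y₀)).hasDerivWithinAt
      · exact hRcont
      · exact continuousOn_const
      · rfl
    have hYgIcc : Yg ∈ Set.Icc Y₀ Yg := ⟨le_of_lt hY₀g, le_refl Yg⟩
    have := hconst Yg hYgIcc
    have hRYg : R Yg = 1 / Yg := by
      simp only [hR, hbc, mul_zero, add_zero]
      field_simp
    rw [hRYg] at this
    exact this.symm
  -- Step 4: solve for P
  intro Y hY
  have hY0 : (0:ℝ) < Y := hY.1
  have hYne : Y ≠ 0 := ne_of_gt hY0
  have hYg3 : (0:ℝ) < 3 * Yg - Y := by linarith [hY.2]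
  obtain ⟨hne, _⟩ := key Y hY
  have hRY := hRval Y hY
  simp only [hR] at hRY
  rw [div_eq_div_iff (mul_ne_zero hne hYne) hYgne] at hRY
  have hPY : P Y = ρ₀ * (Y - Yg) / (3 * Yg - Y) := by
    rw [eq_div_iff (ne_of_gt hYg3)]
    nlinarith [hRY]
  have hpos : 0 < P Y := by
    rw [hPY]
    apply div_pos _ hYg3
    have : Y - Yg < 0 := by linarith [hY.2]
    exact mul_pos_of_neg_of_neg hρ₀ this
  have hform2 : P Y = ρ₀ * (2 / (3 - Y / Yg) - 1) := by
    rw [hPY]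
    have h3 : 3 - Y / Yg ≠ 0 := by
      have : Y / Yg < 1 := (div_lt_one hYg).mpr hY.2
      have : Y / Yg > 0 := div_pos hY0 hYg
      intro h; nlinarith
    rw [show 3 - Y / Yg = (3 * Yg - Y) / Yg by field_simp,
      div_div_eq_mul_div, div_sub' (ne_of_gt hYg3), mul_div_assoc]
    congr 1
    ring
  refine ⟨?_, hform2, hpos⟩
  -- first formula
  have hYsneg : Ys < 0 := by
    rw [hYs]
    have : (0:ℝ) < 8 * π / 3 * Yg ^ 3 := by positivity
    nlinarith
  have habs : (0:ℝ) < |Ys| := abs_pos.mpr (ne_of_lt hYsneg)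
  have hs : (0:ℝ) < Real.sqrt (|Ys| / Yg) := Real.sqrt_pos.mpr (div_pos habs hYg)
  have hsqrt : Real.sqrt (|Ys| * Y ^ 2 / Yg ^ 3) = Real.sqrt (|Ys| / Yg) * (Y / Yg) := by
    have h1 : |Ys| * Y ^ 2 / Yg ^ 3 = (|Ys| / Yg) * (Y / Yg) ^ 2 := by
      field_simp
    rw [h1, Real.sqrt_mul (le_of_lt (div_pos habs hYg)),
      Real.sqrt_sq (le_of_lt (div_pos hY0 hYg))]
  rw [hsqrt, hform2]
  congr 2
  have hden : 3 * Real.sqrt (|Ys| / Yg) - Real.sqrt (|Ys| / Yg) * (Y / Yg)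
      = Real.sqrt (|Ys| / Yg) * (3 - Y / Yg) := by ring
  rw [hden, mul_comm 2 (Real.sqrt (|Ys| / Yg)), mul_div_mul_left _ _ (ne_of_gt hs)]
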